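/- For every real n > 1, there exists a unique x < 0 such that f_n(x) = x, i.e., PoLU with n > 1 intersects the line y = x at exactly one negative point. -/

import Mathlib

noncomputable def polu (n : ℝ) (x : ℝ) : ℝ :=
  if 0 ≤ x then x else (1 - x) ^ (-n) - 1

private lemma hasDerivAt_one_sub_rpow (p : ℝ) {x : ℝ} (hx : x < 1) :
    HasDerivAt (fun y : ℝ => (1 - y) ^ p) (-p * (1 - x) ^ (p - 1)) x := by
  have h1 : HasDerivAt (fun y : ℝ => 1 - y) (-1) x := by
    simpa using (hasDerivAt_id x).const_sub 1
  have h2 : HasDerivAt (fun z : ℝ => z ^ p) (p * (1 - x) ^ (p - 1)) (1 - x) :=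
    Real.hasDerivAt_rpow_const (Or.inl (by linarith))
  have h3 := h2.comp x h1
  have : (p * (1 - x) ^ (p - 1) * -1) = -p * (1 - x) ^ (p - 1) := by ring
  rw [this] at h3
  exact h3

theorem polu_unique_neg_fixed_point (n : ℝ) (hn : 1 < n) :
    ∃! x : ℝ, x < 0 ∧ polu n x = x := by
  have hn0 : (0:ℝ) < n := by linarith
  set g : ℝ → ℝ := fun x => (1 - x) ^ (-n) - 1 - x with hg
  set g1 : ℝ → ℝ := fun x => n * (1 - x) ^ (-n - 1) - 1 with hg1
  -- first derivative
  have hd1 : ∀ x ∈ Set.Iio (1:ℝ), HasDerivAt g (g1 x) x := by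
    intro x hx
    have h := ((hasDerivAt_one_sub_rpow (-n) hx).sub_const 1).sub (hasDerivAt_id x)
    have he : -(-n) * (1 - x) ^ (-n - 1) - 1 = g1 x := by simp [hg1]
    rw [← he]; exact h
  -- second derivative
  have hd2 : ∀ x ∈ Set.Iio (1:ℝ),
      HasDerivAt g1 (n * (n + 1) * (1 - x) ^ (-n - 2)) x := by
    intro x hx
    have h := ((hasDerivAt_one_sub_rpow (-n - 1) hx).const_mul n).sub_const 1
    rw [show (-n - 1 - 1 : ℝ) = -n - 2 by ring] at h
    rw [show n * (n + 1) * (1 - x) ^ (-n - 2) = n * (-(-n - 1) * (1 - x) ^ (-n - 2)) by ring]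
    exact h
  -- strict convexity on Iic 0
  have hsc : StrictConvexOn ℝ (Set.Iic (0:ℝ)) g := by
    apply strictConvexOn_of_deriv2_pos (convex_Iic 0)
    · intro x hx
      exact (hd1 x (Set.mem_Iio.mpr (lt_of_le_of_lt hx one_pos))).continuousAt.continuousWithinAt
    · intro x hx
      rw [interior_Iic] at hx
      have hx1 : x ∈ Set.Iio (1:ℝ) := Set.mem_Iio.mpr (lt_trans hx.out one_pos)
      have hev : deriv g =ᶠ[nhds x] g1 := by
        filter_upwards [Iio_mem_nhds (show x < (1:ℝ) from hx1)] with y hy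
        exact (hd1 y hy).deriv
      have h2 : HasDerivAt (deriv g) (n * (n + 1) * (1 - x) ^ (-n - 2)) x :=
        (hd2 x hx1).congr_of_eventuallyEq hev
      have : deriv^[2] g x = n * (n + 1) * (1 - x) ^ (-n - 2) := by
        simp only [Function.iterate_succ, Function.iterate_zero, Function.comp_apply, id_eq]
        exact h2.deriv
      rw [this]
      have : (0:ℝ) < 1 - x := by linarith [hx.out]
      positivity
  have hg0 : g 0 = 0 := by simp [hg]
  -- a negative point where g is negative
  set s : ℝ := (n - 1) / (2 * n) with hs
  have hspos : 0 < s := div_pos (by linarith) (by linarith)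
  have hslt : s < 1 / 2 := by
    rw [hs, div_lt_div_iff₀ (by positivity) (by norm_num)]
    nlinarith
  have hgb : g (-s) < 0 := by
    have h1s : (0:ℝ) < 1 + s := by linarith
    have hbern : 1 + n * s ≤ (1 + s) ^ n :=
      one_add_mul_self_le_rpow_one_add (by linarith) hn.le
    have hns : (0:ℝ) < 1 + n * s := by positivity
    have hrw : (1 - (-s)) ^ (-n) = ((1 + s) ^ n)⁻¹ := by
      rw [show 1 - (-s) = 1 + s by ring, Real.rpow_neg h1s.le]
    have hle : ((1 + s) ^ n)⁻¹ ≤ (1 + n * s)⁻¹ :=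
      inv_anti₀ hns hbern
    have hlt : (1 + n * s)⁻¹ < 1 - s := by
      rw [inv_lt_iff_one_lt_mul₀ hns]
      have : n * s = (n - 1) / 2 := by
        rw [hs]; field_simp
      nlinarith
    show (1 - (-s)) ^ (-n) - 1 - (-s) < 0
    rw [hrw]
    linarith
  have hga : 0 < g (-2) := by
    have : g (-2) = (3:ℝ) ^ (-n) + 1 := by
      show (1 - (-2:ℝ)) ^ (-n) - 1 - (-2) = 3 ^ (-n) + 1
      rw [show (1:ℝ) - (-2) = 3 by norm_num]; ring
    rw [this]
    have := Real.rpow_pos_of_pos (show (0:ℝ) < 3 by norm_num) (-n)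
    linarith
  have hab : (-2:ℝ) ≤ -s := by linarith
  -- existence via IVT
  have hcont : ContinuousOn g (Set.Icc (-2) (-s)) := by
    intro x hx
    exact (hd1 x (by have := hx.2; simp only [Set.mem_Iio]; linarith)).continuousAt.continuousWithinAt
  obtain ⟨x, hxmem, hgx⟩ : ∃ x ∈ Set.Ioo (-2:ℝ) (-s), g x = 0 := by
    have := intermediate_value_Ioo' hab hcont (Set.mem_Ioo.mpr ⟨hgb, hga⟩)
    obtain ⟨x, hx, hgx⟩ := this
    exact ⟨x, hx, hgx⟩
  have hxneg : x < 0 := by have := hxmem.2; linarith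
  -- g x = 0 ↔ polu fixed point for x < 0
  have hpolu : ∀ y : ℝ, y < 0 → (polu n y = y ↔ g y = 0) := by
    intro y hy
    rw [polu, if_neg (not_le.mpr hy)]
    constructor <;> intro h <;> simp only [hg] at * <;> linarith
  -- uniqueness helper: no two distinct negative zeros
  have huniq : ∀ y z : ℝ, y < 0 → z < 0 → g y = 0 → g z = 0 → y < z → False := by
    intro y z hy hz hgy hgz hyz
    have hy0 : y ≠ 0 := ne_of_lt hy
    set a : ℝ := z / y with ha
    have hapos : 0 < a := div_pos_iff.mpr (Or.inr ⟨hz, hy⟩)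
    have halt : a < 1 := by
      rw [ha, div_lt_one_iff]
      right; right; exact ⟨hy, hyz⟩
    have hcomb : a • y + (1 - a) • (0:ℝ) = z := by
      simp [ha]
      field_simp
    have := hsc.2 (Set.mem_Iic.mpr hy.le) (Set.mem_Iic.mpr le_rfl) hy0
      hapos (by linarith : (0:ℝ) < 1 - a) (by ring)
    rw [hcomb, hgy, hgz, hg0] at this
    simp at this
  refine ⟨x, ⟨hxneg, (hpolu x hxneg).mpr hgx⟩, ?_⟩
  intro y ⟨hyneg, hyfix⟩
  have hgy : g y = 0 := (hpolu y hyneg).mp hyfix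
  rcases lt_trichotomy y x with h | h | h
  · exact absurd (huniq y x hyneg hxneg hgy hgx h) not_false
  · exact h
  · exact absurd (huniq x y hxneg hyneg hgx hgy h) not_false
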